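/- As n_A, n_B → ∞ (with min(n_A,n_B) ≤ 3 maintained or using the average formula), the fraction of trees on the terrace that display the bipartition XA|BY, namely 2 / (2 + R(n_A+n_B)/(R(n_A)R(n_B))), tends to 0; equivalently the fraction with the incorrect bipartition AB|XY tends to 1. -/

import Mathlib

open Filter

/-- `R k = (2k−3)!!`, the number of rooted binary phylogenetic trees on `k` leaves. -/
def Rtrees (k : ℕ) : ℕ := Nat.doubleFactorial (2 * k - 3)

lemma Rtrees_pos (k : ℕ) : 0 < Rtrees k := Nat.doubleFactorial_pos _

lemma Rtrees_succ (a : ℕ) (ha : 1 ≤ a) : Rtrees (a + 1) = (2 * a - 1) * Rtrees a := by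
  match a, ha with
  | 1, _ => decide
  | (n+2), _ =>
    show Nat.doubleFactorial (2 * (n + 3) - 3) = (2 * (n + 2) - 1) * Nat.doubleFactorial (2 * (n + 2) - 3)
    have h1 : 2 * (n + 3) - 3 = (2 * n + 1) + 2 := by omega
    have h2 : 2 * (n + 2) - 3 = 2 * n + 1 := by omega
    have h3 : 2 * (n + 2) - 1 = 2 * n + 3 := by omega
    rw [h1, h2, h3, Nat.doubleFactorial]

lemma Rtrees_key : ∀ a, 1 ≤ a → ∀ b, 1 ≤ b →
    (2 * (a + b) - 3) * (Rtrees a * Rtrees b) ≤ Rtrees (a + b) := by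
  intro a ha
  induction a, ha using Nat.le_induction with
  | base =>
    intro b hb
    have h1 : Rtrees 1 = 1 := by decide
    have hadd : 1 + b = b + 1 := by omega
    rw [h1, hadd, Rtrees_succ b hb]
    have h2 : 2 * (b + 1) - 3 = 2 * b - 1 := by omega
    rw [h2]
    simp
  | succ a ha ih =>
    intro b hb
    have hR : Rtrees (a + 1 + b) = (2 * (a + b) - 1) * Rtrees (a + b) := by
      have h : a + 1 + b = (a + b) + 1 := by omega
      rw [h, Rtrees_succ (a + b) (by omega)]
    rw [hR, Rtrees_succ a ha]
    have h2 := ih b hb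
    have e : 2 * (a + 1 + b) - 3 = 2 * (a + b) - 1 := by omega
    rw [e]
    calc (2 * (a + b) - 1) * ((2 * a - 1) * Rtrees a * Rtrees b)
        ≤ (2 * (a + b) - 1) * ((2 * (a + b) - 3) * (Rtrees a * Rtrees b)) := by
          apply Nat.mul_le_mul_left
          rw [mul_assoc]
          exact Nat.mul_le_mul_right _ (by omega)
      _ ≤ (2 * (a + b) - 1) * Rtrees (a + b) := Nat.mul_le_mul_left _ h2

lemma ratio_tendsto :
    Tendsto (fun p : ℕ × ℕ =>
      (Rtrees (p.1 + p.2) : ℝ) / ((Rtrees p.1 : ℝ) * (Rtrees p.2 : ℝ)))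
      (atTop ×ˢ atTop) atTop := by
  rw [tendsto_atTop]
  intro C
  have h := (eventually_ge_atTop (max 3 (Nat.ceil C))).prod_mk (eventually_ge_atTop 1)
  filter_upwards [h] with p hp
  obtain ⟨ha, hb⟩ := hp
  have ha3 : 3 ≤ p.1 := le_trans (le_max_left _ _) ha
  have haC : Nat.ceil C ≤ p.1 := le_trans (le_max_right _ _) ha
  have key := Rtrees_key p.1 (by omega) p.2 hb
  have hpos : (0:ℝ) < (Rtrees p.1 : ℝ) * (Rtrees p.2 : ℝ) := by
    have := Rtrees_pos p.1; have := Rtrees_pos p.2; positivity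
  rw [le_div_iff₀ hpos]
  have hC : C ≤ ((2 * (p.1 + p.2) - 3 : ℕ) : ℝ) := by
    calc C ≤ (Nat.ceil C : ℝ) := Nat.le_ceil C
      _ ≤ ((2 * (p.1 + p.2) - 3 : ℕ) : ℝ) := Nat.cast_le.mpr (by omega)
  calc C * ((Rtrees p.1 : ℝ) * (Rtrees p.2 : ℝ))
      ≤ ((2 * (p.1 + p.2) - 3 : ℕ) : ℝ) * ((Rtrees p.1 : ℝ) * (Rtrees p.2 : ℝ)) :=
        mul_le_mul_of_nonneg_right hC hpos.le
    _ ≤ (Rtrees (p.1 + p.2) : ℝ) := by exact_mod_cast key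

/-- as `n_A, n_B → ∞`, the fraction `2/(2 + R(n_A+n_B)/(R(n_A)R(n_B)))` of
terrace trees displaying the bipartition `XA|BY` tends to 0; equivalently the fraction
with the incorrect bipartition `AB|XY` tends to 1. -/
theorem terrace_fraction_tendsto :
    Tendsto
      (fun p : ℕ × ℕ =>
        (2 : ℝ) / (2 + (Rtrees (p.1 + p.2) : ℝ) / ((Rtrees p.1 : ℝ) * (Rtrees p.2 : ℝ))))
      (atTop ×ˢ atTop) (nhds 0) ∧
    Tendsto
      (fun p : ℕ × ℕ =>
        ((Rtrees (p.1 + p.2) : ℝ) / ((Rtrees p.1 : ℝ) * (Rtrees p.2 : ℝ))) /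
          (2 + (Rtrees (p.1 + p.2) : ℝ) / ((Rtrees p.1 : ℝ) * (Rtrees p.2 : ℝ))))
      (atTop ×ˢ atTop) (nhds 1) := by
  set f : ℕ × ℕ → ℝ := fun p =>
    (Rtrees (p.1 + p.2) : ℝ) / ((Rtrees p.1 : ℝ) * (Rtrees p.2 : ℝ)) with hf
  have hfnn : ∀ p, 0 ≤ f p := fun p => by positivity
  have hden : ∀ p, (2 : ℝ) + f p ≠ 0 := fun p => by
    have := hfnn p; positivity
  have h1 : Tendsto (fun p => (2:ℝ) / (2 + f p)) (atTop ×ˢ atTop) (nhds 0) :=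
    Tendsto.div_atTop tendsto_const_nhds
      (tendsto_atTop_add_const_left _ 2 ratio_tendsto)
  refine ⟨h1, ?_⟩
  have heq : ∀ p, f p / (2 + f p) = 1 - 2 / (2 + f p) := by
    intro p
    field_simp [hden p]
    ring
  have h2 : Tendsto (fun p => 1 - (2:ℝ) / (2 + f p)) (atTop ×ˢ atTop) (nhds 1) := by
    simpa using tendsto_const_nhds.sub h1
  exact h2.congr (fun p => (heq p).symm)
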